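/- The set Γ := {(a₀,a₁) ∈ F × F : a₀^{q²} = a₀, a₀ ≠ 0, and (a₀^q·a₁ + a₀·a₁^q)^q = a₀^q·a₁ + a₀·a₁^q} is finite and has exactly q²(q²−1) elements. -/

import Mathlib

open Polynomial Set

/-- The torus `Γ ≅ (𝒪_E/π²)^×` in coordinates. -/
def GammaSet (q : ℕ) (F : Type*) [Field F] : Set (F × F) :=
  {a | a.1 ^ (q ^ 2) = a.1 ∧ a.1 ≠ 0 ∧
    (a.1 ^ q * a.2 + a.1 * a.2 ^ q) ^ q = a.1 ^ q * a.2 + a.1 * a.2 ^ q}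

theorem stmt3 (p : ℕ) (hp : p.Prime) (hodd : Odd p) (q : ℕ)
    (hq : ∃ n : ℕ, 0 < n ∧ q = p ^ n)
    (F : Type*) [Field F] [IsAlgClosed F] [CharP F p] :
    (GammaSet q F).Finite ∧ (GammaSet q F).ncard = q ^ 2 * (q ^ 2 - 1) := by
  obtain ⟨n, hn, rfl⟩ := hq
  haveI : Fact p.Prime := ⟨hp⟩
  set q := p ^ n with hqdef
  have hq1 : 1 < q := Nat.one_lt_pow hn.ne' hp.one_lt
  have hq0 : q ≠ 0 := by omega
  set f : F[X] := X ^ (q ^ 2) - X with hf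
  have hpq : p ∣ q ^ 2 := dvd_pow (dvd_pow_self p hn.ne') two_ne_zero
  have hsep : f.Separable := galois_poly_separable p (q ^ 2) hpq
  have hdeg : f.natDegree = q ^ 2 := by
    have := FiniteField.X_pow_card_pow_sub_X_natDegree_eq F (n := 2) two_ne_zero hq1
    simpa [hf, pow_mul] using this
  set R : Set F := {y : F | y ^ (q ^ 2) = y} with hR
  have hRroot : R = f.rootSet F := by
    ext y
    simp [hR, hf, Polynomial.mem_rootSet, sub_eq_zero,
      FiniteField.X_pow_card_pow_sub_X_ne_zero F two_ne_zero hq1, pow_mul]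
  have hcard : R.ncard = q ^ 2 := by
    rw [hRroot, ← Nat.card_coe_set_eq, Nat.card_eq_fintype_card,
      Polynomial.card_rootSet_eq_natDegree hsep (IsAlgClosed.splits _), hdeg]
  have hRfin : R.Finite := by
    rw [hRroot]; exact Polynomial.rootSet_finite f F
  have h0R : (0 : F) ∈ R := by
    simp [hR, zero_pow (pow_ne_zero 2 hq0)]
  have hcard' : (R \ {0}).ncard = q ^ 2 - 1 := by
    rw [Set.ncard_diff_singleton_of_mem h0R, hcard]
  have hadd : ∀ x y : F, (x + y) ^ q = x ^ q + y ^ q := fun x y => by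
    rw [hqdef]; exact add_pow_char_pow x y p n
  have hkey : GammaSet q F = (R \ {0}) ×ˢ R := by
    ext ⟨a₀, a₁⟩
    simp only [GammaSet, Set.mem_setOf_eq, Set.mem_prod, Set.mem_diff,
      Set.mem_singleton_iff, hR]
    constructor
    · rintro ⟨h1, h2, h3⟩
      refine ⟨⟨h1, h2⟩, ?_⟩
      have h1' : (a₀ ^ q) ^ q = a₀ := by rw [← pow_mul, ← sq]; exact h1
      rw [hadd, mul_pow, mul_pow, h1', ← pow_mul, ← sq] at h3
      have h4 : a₀ ^ q * a₁ ^ (q ^ 2) = a₀ ^ q * a₁ := by linear_combination h3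
      exact mul_left_cancel₀ (pow_ne_zero q h2) h4
    · rintro ⟨⟨h1, h2⟩, h3⟩
      refine ⟨h1, h2, ?_⟩
      have h1' : (a₀ ^ q) ^ q = a₀ := by rw [← pow_mul, ← sq]; exact h1
      rw [hadd, mul_pow, mul_pow, h1', ← pow_mul, ← sq, h3]
      ring
  have hfin : (GammaSet q F).Finite := by
    rw [hkey]; exact (hRfin.diff).prod hRfin
  refine ⟨hfin, ?_⟩
  have hprod : ((R \ {0}) ×ˢ R).ncard = (R \ {0}).ncard * R.ncard := by
    rw [← Nat.card_coe_set_eq, ← Nat.card_coe_set_eq, ← Nat.card_coe_set_eq, ← Nat.card_prod]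
    exact Nat.card_congr (Equiv.Set.prod _ _)
  rw [hkey, hprod, hcard, hcard', Nat.mul_comm]
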